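/- For every p > 1 and every x ∈ (0,1), setting z = (x^p/(1+x^p))^(1/p), the following two-sided bound holds: z·(1 + log(1+x^p)/(1+p)) < arsinh_p(x) < z·(1 + (1/p)·log(1+x^p)). -/

import Mathlib

open Real MeasureTheory Set

/-- The generalized inverse hyperbolic sine: `arsinh_p x = ∫₀ˣ (1 + tᵖ)^(-1/p) dt`. -/
noncomputable def arsinhp (p x : ℝ) : ℝ := ∫ t in (0:ℝ)..x, (1 + t ^ p) ^ (-1 / p)

section aux

variable {p : ℝ}

lemma cont_g (hp : 0 < p) :
    ContinuousOn (fun t : ℝ => (1 + t ^ p) ^ (-1 / p)) (Ici 0) := by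
  intro t ht
  have htp : (0:ℝ) ≤ t ^ p := Real.rpow_nonneg ht p
  have h1 : ContinuousAt (fun t : ℝ => 1 + t ^ p) t :=
    continuousAt_const.add (Real.continuousAt_rpow_const t p (Or.inr hp.le))
  exact (h1.rpow_const (Or.inl (by positivity))).continuousWithinAt

lemma hasDerivAt_arsinhp (hp : 0 < p) {y : ℝ} (hy : 0 < y) :
    HasDerivAt (arsinhp p) ((1 + y ^ p) ^ (-1 / p)) y := by
  have hco : ContinuousOn (fun t : ℝ => (1 + t ^ p) ^ (-1 / p)) (Ioi 0) :=
    (cont_g hp).mono Ioi_subset_Ici_self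
  apply intervalIntegral.integral_hasDerivAt_right
  · exact ((cont_g hp).mono (by rw [uIcc_of_le hy.le]; exact fun z hz => hz.1)).intervalIntegrable
  · exact hco.stronglyMeasurableAtFilter isOpen_Ioi y hy
  · exact hco.continuousAt (Ioi_mem_nhds hy)

lemma hasDerivAt_G (hp : 1 < p) (c : ℝ) {y : ℝ} (hy : 0 < y) :
    HasDerivAt (fun y : ℝ => y * (1 + y ^ p) ^ (-1 / p) * (1 + c * Real.log (1 + y ^ p)))
      ((1 + y ^ p) ^ (-1 / p - 1) * (1 + c * Real.log (1 + y ^ p) + c * p * y ^ p)) y := by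
  have hyp : (0:ℝ) < y ^ p := Real.rpow_pos_of_pos hy p
  have hu : (0:ℝ) < 1 + y ^ p := by linarith
  have h2 : HasDerivAt (fun y : ℝ => 1 + y ^ p) (p * y ^ (p - 1)) y :=
    (Real.hasDerivAt_rpow_const (Or.inl hy.ne')).const_add 1
  have h3 := h2.rpow_const (p := -1/p) (Or.inl hu.ne')
  have h4 := h2.log hu.ne'
  have h5 : HasDerivAt (fun y : ℝ => y * (1 + y ^ p) ^ (-1 / p) * (1 + c * Real.log (1 + y ^ p))) _ y :=
    ((hasDerivAt_id y).mul h3).mul ((h4.const_mul c).const_add 1)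
  convert h5 using 1
  have e1 : y ^ (p - 1) * y = y ^ p := by
    rw [← Real.rpow_add_one hy.ne', sub_add_cancel]
  have e2 : (1 + y ^ p) ^ (-1 / p) = (1 + y ^ p) ^ (-1 / p - 1) * (1 + y ^ p) := by
    rw [← Real.rpow_add_one hu.ne']; ring_nf
  have hp0 : p ≠ 0 := by positivity
  have e3 : y * (p * y ^ (p - 1) * (-1 / p) * (1 + y ^ p) ^ (-1 / p - 1))
      = -(y ^ p * (1 + y ^ p) ^ (-1 / p - 1)) := by
    rw [show y * (p * y ^ (p - 1) * (-1 / p) * (1 + y ^ p) ^ (-1 / p - 1))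
        = (y ^ (p - 1) * y) * (p * (-1 / p)) * (1 + y ^ p) ^ (-1 / p - 1) by ring, e1]
    field_simp
  have e4 : y * ((1 + y ^ p) ^ (-1 / p - 1) * (1 + y ^ p)) * (c * (p * y ^ (p - 1) / (1 + y ^ p)))
      = c * p * y ^ p * (1 + y ^ p) ^ (-1 / p - 1) := by
    rw [show y * ((1 + y ^ p) ^ (-1 / p - 1) * (1 + y ^ p)) * (c * (p * y ^ (p - 1) / (1 + y ^ p)))
        = (y ^ (p - 1) * y) * c * p * ((1 + y ^ p) / (1 + y ^ p)) * (1 + y ^ p) ^ (-1 / p - 1)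
        by ring, e1, div_self hu.ne']
    ring
  simp only [id_eq, Pi.mul_apply]
  rw [e2, e3, e4]
  ring

end aux

section main

variable {p : ℝ}

lemma contG (hp : 0 < p) (c : ℝ) :
    ContinuousOn (fun y : ℝ => y * (1 + y ^ p) ^ (-1 / p) * (1 + c * Real.log (1 + y ^ p)))
      (Ici 0) := by
  intro t ht
  have htp : (0:ℝ) ≤ t ^ p := Real.rpow_nonneg ht p
  have hne : (1:ℝ) + t ^ p ≠ 0 := by positivity
  have h1 : ContinuousAt (fun t : ℝ => 1 + t ^ p) t :=
    continuousAt_const.add (Real.continuousAt_rpow_const t p (Or.inr hp.le))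
  exact ((continuousAt_id.mul (h1.rpow_const (Or.inl hne))).mul
    (((h1.log hne).const_mul c).const_add 1)).continuousWithinAt

lemma arsinhp_continuousOn (hp : 0 < p) {x : ℝ} (hx0 : 0 < x) :
    ContinuousOn (arsinhp p) (Icc 0 x) := by
  have hI : IntegrableOn (fun t : ℝ => (1 + t ^ p) ^ (-1 / p)) (uIcc 0 x) := by
    rw [uIcc_of_le hx0.le]
    exact ((cont_g hp).mono Icc_subset_Ici_self).integrableOn_Icc
  have := intervalIntegral.continuousOn_primitive_interval hI
  rwa [uIcc_of_le hx0.le] at this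

lemma G_lt_arsinhp (hp : 1 < p) (c : ℝ) {x : ℝ} (hx0 : 0 < x)
    (hsign : ∀ u : ℝ, 0 < u → 0 < u - c * Real.log (1 + u) - c * p * u) :
    x * (1 + x ^ p) ^ (-1 / p) * (1 + c * Real.log (1 + x ^ p)) < arsinhp p x := by
  have hp' : (0:ℝ) < p := by linarith
  have hmono : StrictMonoOn
      (fun y : ℝ => arsinhp p y - y * (1 + y ^ p) ^ (-1 / p) * (1 + c * Real.log (1 + y ^ p)))
      (Icc 0 x) := by
    apply strictMonoOn_of_deriv_pos (convex_Icc 0 x)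
    · exact (arsinhp_continuousOn hp' hx0).sub ((contG hp' c).mono Icc_subset_Ici_self)
    · intro y hy
      rw [interior_Icc] at hy
      have hd := (hasDerivAt_arsinhp hp' hy.1).sub (hasDerivAt_G hp c hy.1)
      erw [hd.deriv]
      have hyp : (0:ℝ) < y ^ p := Real.rpow_pos_of_pos hy.1 p
      have hu : (0:ℝ) < 1 + y ^ p := by linarith
      have e2 : (1 + y ^ p) ^ (-1 / p) = (1 + y ^ p) ^ (-1 / p - 1) * (1 + y ^ p) := by
        rw [← Real.rpow_add_one hu.ne']; ring_nf
      rw [e2, show (1 + y ^ p) ^ (-1 / p - 1) * (1 + y ^ p) -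
          (1 + y ^ p) ^ (-1 / p - 1) * (1 + c * Real.log (1 + y ^ p) + c * p * y ^ p)
          = (1 + y ^ p) ^ (-1 / p - 1) *
            (y ^ p - c * Real.log (1 + y ^ p) - c * p * y ^ p) by ring]
      exact mul_pos (Real.rpow_pos_of_pos hu _) (hsign _ hyp)
  have h := hmono (left_mem_Icc.mpr hx0.le) (right_mem_Icc.mpr hx0.le) hx0
  simp only [arsinhp, intervalIntegral.integral_same, zero_mul, mul_zero] at h
  simp only [arsinhp] at h ⊢
  linarith [h]

lemma arsinhp_lt_G (hp : 1 < p) (c : ℝ) {x : ℝ} (hx0 : 0 < x)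
    (hsign : ∀ u : ℝ, 0 < u → 0 < c * Real.log (1 + u) + c * p * u - u) :
    arsinhp p x < x * (1 + x ^ p) ^ (-1 / p) * (1 + c * Real.log (1 + x ^ p)) := by
  have hp' : (0:ℝ) < p := by linarith
  have hmono : StrictMonoOn
      (fun y : ℝ => y * (1 + y ^ p) ^ (-1 / p) * (1 + c * Real.log (1 + y ^ p)) - arsinhp p y)
      (Icc 0 x) := by
    apply strictMonoOn_of_deriv_pos (convex_Icc 0 x)
    · exact ((contG hp' c).mono Icc_subset_Ici_self).sub (arsinhp_continuousOn hp' hx0)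
    · intro y hy
      rw [interior_Icc] at hy
      have hd := (hasDerivAt_G hp c hy.1).sub (hasDerivAt_arsinhp hp' hy.1)
      erw [hd.deriv]
      have hyp : (0:ℝ) < y ^ p := Real.rpow_pos_of_pos hy.1 p
      have hu : (0:ℝ) < 1 + y ^ p := by linarith
      have e2 : (1 + y ^ p) ^ (-1 / p) = (1 + y ^ p) ^ (-1 / p - 1) * (1 + y ^ p) := by
        rw [← Real.rpow_add_one hu.ne']; ring_nf
      rw [e2, show (1 + y ^ p) ^ (-1 / p - 1) * (1 + c * Real.log (1 + y ^ p) + c * p * y ^ p) -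
          (1 + y ^ p) ^ (-1 / p - 1) * (1 + y ^ p)
          = (1 + y ^ p) ^ (-1 / p - 1) *
            (c * Real.log (1 + y ^ p) + c * p * y ^ p - y ^ p) by ring]
      exact mul_pos (Real.rpow_pos_of_pos hu _) (hsign _ hyp)
  have h := hmono (left_mem_Icc.mpr hx0.le) (right_mem_Icc.mpr hx0.le) hx0
  simp only [arsinhp, intervalIntegral.integral_same, zero_mul, mul_zero] at h
  simp only [arsinhp] at h ⊢
  linarith [h]

end main

theorem arsinhp_bounds (p x : ℝ) (hp : 1 < p) (hx : x ∈ Set.Ioo (0:ℝ) 1) :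
    (x ^ p / (1 + x ^ p)) ^ (1 / p) * (1 + Real.log (1 + x ^ p) / (1 + p)) < arsinhp p x ∧
      arsinhp p x < (x ^ p / (1 + x ^ p)) ^ (1 / p) * (1 + (1 / p) * Real.log (1 + x ^ p)) := by
  obtain ⟨hx0, hx1⟩ := hx
  have hp' : (0:ℝ) < p := by linarith
  have hxp : (0:ℝ) < x ^ p := Real.rpow_pos_of_pos hx0 p
  have hu : (0:ℝ) < 1 + x ^ p := by linarith
  have hz : (x ^ p / (1 + x ^ p)) ^ ((1:ℝ) / p) = x * (1 + x ^ p) ^ (-1 / p) := by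
    rw [Real.div_rpow hxp.le hu.le, one_div, Real.rpow_rpow_inv hx0.le hp'.ne',
      div_eq_mul_inv, ← Real.rpow_neg hu.le, show -p⁻¹ = -1 / p by ring]
  constructor
  · rw [hz, show Real.log (1 + x ^ p) / (1 + p) = (1 / (1 + p)) * Real.log (1 + x ^ p) by ring]
    apply G_lt_arsinhp hp _ hx0
    intro u hu'
    have hL : Real.log (1 + u) < u := by
      have := Real.log_lt_sub_one_of_pos (show (0:ℝ) < 1 + u by linarith)
        (by intro h; nlinarith [h])
      linarith
    have h1p : (0:ℝ) < 1 + p := by linarith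
    have : u - (1 / (1 + p)) * Real.log (1 + u) - (1 / (1 + p)) * p * u
        = (u - Real.log (1 + u)) / (1 + p) := by field_simp; ring
    rw [this]
    exact div_pos (by linarith) h1p
  · rw [hz]
    apply arsinhp_lt_G hp _ hx0
    intro u hu'
    have hL : 0 < Real.log (1 + u) := Real.log_pos (by linarith)
    have : (1 / p) * Real.log (1 + u) + (1 / p) * p * u - u = Real.log (1 + u) / p := by
      field_simp; ring
    rw [this]
    exact div_pos hL hp'
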